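/- Let d be the largest real root of x³ − 2x² − x + 1, let e = d² − d − 1, and set r₁ = d² − 4d + 3, r₂ = d² − 3d + 2, r₃ = d² − 3d + 1. Then the symmetric 3×3 matrix U with rows (1/d, √e/d, √d/d), (√e/d, e·r₁/d, √(e/d)·r₂), (√d/d, √(e/d)·r₂, r₃) satisfies U² = I; in particular U is a real orthogonal involution. -/

import Mathlib

theorem stmt_10 (d e r₁ r₂ r₃ : ℝ)
    (hroot : d ^ 3 - 2 * d ^ 2 - d + 1 = 0)
    (hmax : ∀ x : ℝ, x ^ 3 - 2 * x ^ 2 - x + 1 = 0 → x ≤ d)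
    (he : e = d ^ 2 - d - 1)
    (hr₁ : r₁ = d ^ 2 - 4 * d + 3)
    (hr₂ : r₂ = d ^ 2 - 3 * d + 2)
    (hr₃ : r₃ = d ^ 2 - 3 * d + 1)
    (U : Matrix (Fin 3) (Fin 3) ℝ)
    (hU : U = Matrix.of
      ![![1 / d, Real.sqrt e / d, Real.sqrt d / d],
        ![Real.sqrt e / d, e * r₁ / d, Real.sqrt (e / d) * r₂],
        ![Real.sqrt d / d, Real.sqrt (e / d) * r₂, r₃]]) :
    U * U = 1 := by
  -- d > 2 via the intermediate value theorem on [2,3]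
  have hd2 : 2 < d := by
    have hcont : ContinuousOn (fun x : ℝ => x ^ 3 - 2 * x ^ 2 - x + 1) (Set.Icc 2 3) :=
      (continuous_id.pow 3 |>.sub (continuous_const.mul (continuous_id.pow 2))
        |>.sub continuous_id |>.add continuous_const).continuousOn
    have h0 : (0 : ℝ) ∈ Set.Icc ((2:ℝ) ^ 3 - 2 * 2 ^ 2 - 2 + 1) ((3:ℝ) ^ 3 - 2 * 3 ^ 2 - 3 + 1) := by
      norm_num
    obtain ⟨x, hx, hfx⟩ := intermediate_value_Icc (by norm_num : (2:ℝ) ≤ 3) hcont h0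
    have hxd := hmax x hfx
    have hdn : d ≠ 2 := by
      intro h; rw [h] at hroot; norm_num at hroot
    exact lt_of_le_of_ne (le_trans hx.1 hxd) (Ne.symm hdn)
  have hd0 : (0:ℝ) < d := by linarith
  have he0 : (0:ℝ) < e := by nlinarith
  have hse2 : Real.sqrt e ^ 2 = e := Real.sq_sqrt he0.le
  have hsd2 : Real.sqrt d ^ 2 = d := Real.sq_sqrt hd0.le
  have hsd0 : (0:ℝ) < Real.sqrt d := Real.sqrt_pos.mpr hd0
  have hsqd : Real.sqrt (e / d) = Real.sqrt e / Real.sqrt d := Real.sqrt_div he0.le d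
  have L1 : 1 + e * r₁ + d * r₂ = 0 := by
    subst he hr₁ hr₂; linear_combination (d - 2) * hroot
  have L2 : 1 + e * r₂ + d * r₃ = 0 := by
    subst he hr₂ hr₃; linear_combination (d - 1) * hroot
  have L11 : e * (1 + e * r₁ ^ 2 + d * r₂ ^ 2) = d ^ 2 := by
    subst he hr₁ hr₂
    linear_combination (d^5 - 7*d^4 + 17*d^3 - 14*d^2 - 3*d + 8) * hroot
  have L12 : 1 + e * r₁ * r₂ + d * r₂ * r₃ = 0 := by
    subst he hr₁ hr₂ hr₃; linear_combination (d^3 - 5*d^2 + 8*d - 5) * hroot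
  have L22 : 1 + e * r₂ ^ 2 + d * r₃ ^ 2 = d := by
    subst he hr₂ hr₃; linear_combination (d^3 - 4*d^2 + 5*d - 3) * hroot
  have hdne : d ≠ 0 := hd0.ne'
  have hsdne : Real.sqrt d ≠ 0 := hsd0.ne'
  ext i j
  fin_cases i <;> fin_cases j <;>
    simp [hU, Matrix.mul_apply, Fin.sum_univ_three, Matrix.one_apply, hsqd] <;>
    field_simp
  · linear_combination hse2 + hsd2 + he
  · linear_combination Real.sqrt e * L1
  · linear_combination (1 + d*r₃) * hsd2 + d*r₂ * hse2 + d * L2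
  · linear_combination Real.sqrt e * L1
  · linear_combination (Real.sqrt d^2 + d^2*r₂^2) * hse2 + (e + e^2*r₁^2 - d^2) * hsd2 + d * L11
  · linear_combination Real.sqrt e * hsd2 + Real.sqrt e * d * L12
  · linear_combination (1 + d*r₃) * hsd2 + d*r₂ * hse2 + d * L2
  · linear_combination Real.sqrt e * hsd2 + Real.sqrt e * d * L12
  · linear_combination (Real.sqrt d^2 + d + d^2*r₃^2 - d^2) * hsd2 + d^2*r₂^2 * hse2 + d^2 * L22
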